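/- Let (G_n) be finite graphs with |V(G_n)| → ∞ admitting a locally finite local weak limit (in the Benjamini–Schramm sense), and let (H_n) be random graphs on the same vertex sets with P(|E(G_n) △ E(H_n)| ≤ t_n) → 1 for some t_n = o(|V(G_n)|). Then (H_n) has the same local weak limit as (G_n). -/

import Mathlib

open MeasureTheory Filter

section Aux

open SimpleGraph

variable {V : Type}

/-- The rooted ball as a set. -/
private def gBall (G : SimpleGraph V) (o : V) (r : ℕ) : Set V :=
  {x | G.Reachable o x ∧ G.dist o x ≤ r}

/-- The good-root set from the statement. -/
private def goodSet (r : ℕ) (G H : SimpleGraph V) : Set V :=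
  {o | (∀ x : V, (G.Reachable o x ∧ G.dist o x ≤ r) ↔
          (H.Reachable o x ∧ H.dist o x ≤ r)) ∧
       (∀ x y : V, G.Reachable o x → G.dist o x ≤ r →
          G.Reachable o y → G.dist o y ≤ r → (G.Adj x y ↔ H.Adj x y))}

private lemma walk_transfer {G H : SimpleGraph V} :
    ∀ {u x : V} (p : G.Walk u x),
      (∀ v ∈ p.support, ∀ w, G.Adj v w → H.Adj v w) →
      ∃ q : H.Walk u x, q.length = p.length := by
  intro u x p
  induction p with
  | nil => exact fun _ => ⟨SimpleGraph.Walk.nil, rfl⟩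
  | cons h p ih =>
    intro hsupp
    obtain ⟨q, hq⟩ := ih (fun v hv w hw => hsupp v (by simp [hv]) w hw)
    exact ⟨SimpleGraph.Walk.cons (hsupp _ (by simp) _ h) q, by simp [hq]⟩

private lemma walk_back {G H : SimpleGraph V} {o : V} {r : ℕ}
    (hfree : ∀ v, G.Reachable o v → G.dist o v ≤ r → ∀ w, (G.Adj v w ↔ H.Adj v w)) :
    ∀ {u x : V} (q : H.Walk u x) (p : G.Walk o u), p.length + q.length ≤ r →
      ∃ p' : G.Walk o x, p'.length ≤ r := by
  intro u x q
  induction q with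
  | nil => exact fun p hp => ⟨p, by simpa using hp⟩
  | cons hadj q ih =>
    intro p hp
    rw [SimpleGraph.Walk.length_cons] at hp
    have hu : G.Adj _ _ :=
      (hfree _ ⟨p⟩ ((SimpleGraph.dist_le p).trans (by omega)) _).mpr hadj
    exact ih (p.concat hu) (by rw [SimpleGraph.Walk.length_concat]; omega)

private lemma good_of_free [DecidableEq V] {G H : SimpleGraph V} {o : V} {r : ℕ}
    (hfree : ∀ v, G.Reachable o v → G.dist o v ≤ r → ∀ w, (G.Adj v w ↔ H.Adj v w)) :
    o ∈ goodSet r G H := by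
  constructor
  · intro x
    constructor
    · rintro ⟨hreach, hdist⟩
      obtain ⟨p, hp⟩ := hreach.exists_walk_length_eq_dist
      have hsupp : ∀ v ∈ p.support, ∀ w, G.Adj v w → H.Adj v w := by
        intro v hv w hw
        have h1 : G.Reachable o v := ⟨p.takeUntil v hv⟩
        have h2 : G.dist o v ≤ r :=
          le_trans (le_trans (SimpleGraph.dist_le _) (p.length_takeUntil_le hv))
            (by rw [hp]; exact hdist)
        exact (hfree v h1 h2 w).mp hw
      obtain ⟨q, hq⟩ := walk_transfer p hsupp
      exact ⟨⟨q⟩, le_trans (SimpleGraph.dist_le q) (by rw [hq, hp]; exact hdist)⟩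
    · rintro ⟨hreach, hdist⟩
      obtain ⟨q, hq⟩ := hreach.exists_walk_length_eq_dist
      obtain ⟨p', hp'⟩ := walk_back hfree q SimpleGraph.Walk.nil (by simpa [hq] using hdist)
      exact ⟨⟨p'⟩, le_trans (SimpleGraph.dist_le p') hp'⟩
  · intro x y hx1 hx2 _ _
    exact hfree x hx1 hx2 y

private lemma ncard_biUnion_le_aux {α β : Type} [Finite α] {s : Set β} (hs : s.Finite)
    (f : β → Set α) (m : ℕ) :
    ∀ _ : (∀ b ∈ s, (f b).ncard ≤ m), (⋃ b ∈ s, f b).ncard ≤ s.ncard * m := by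
  refine Set.Finite.induction_on
    (motive := fun s _ => (∀ b ∈ s, (f b).ncard ≤ m) → (⋃ b ∈ s, f b).ncard ≤ s.ncard * m)
    s hs (by simp) ?_
  intro a s ha hs ih hm
  rw [Set.biUnion_insert, Set.ncard_insert_of_notMem ha hs]
  calc (f a ∪ ⋃ b ∈ s, f b).ncard ≤ (f a).ncard + (⋃ b ∈ s, f b).ncard :=
        Set.ncard_union_le _ _
    _ ≤ m + s.ncard * m := by
        exact Nat.add_le_add (hm a (Set.mem_insert _ _))
          (ih (fun b hb => hm b (Set.mem_insert_of_mem _ hb)))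
    _ = (s.ncard + 1) * m := by ring

private lemma ncard_sym2_mem_le (e : Sym2 V) : {v : V | v ∈ e}.ncard ≤ 2 := by
  induction e with
  | _ a b =>
    have h : {v : V | v ∈ (s(a, b) : Sym2 V)} = {a, b} := by
      ext v; simp [Sym2.mem_iff]
    rw [h]
    exact (Set.ncard_insert_le _ _).trans (by simp [Set.ncard_singleton])

private lemma measurableSet_graph_pre {Ω : Type} [MeasurableSpace Ω] [Finite V]
    (H : Ω → SimpleGraph V) (hm : ∀ x y, MeasurableSet {ω | (H ω).Adj x y})
    (s : Set (SimpleGraph V)) : MeasurableSet {ω | H ω ∈ s} := by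
  haveI : Countable V := Finite.to_countable
  have hsingle : ∀ g : SimpleGraph V, MeasurableSet {ω | H ω = g} := by
    intro g
    have hset : {ω | H ω = g} = ⋂ x, ⋂ y, {ω | ((H ω).Adj x y ↔ g.Adj x y)} := by
      ext ω
      simp only [Set.mem_setOf_eq, Set.mem_iInter]
      constructor
      · rintro rfl x y; exact Iff.rfl
      · intro h
        ext x y
        exact h x y
    rw [hset]
    refine MeasurableSet.iInter fun x => MeasurableSet.iInter fun y => ?_
    by_cases hg : g.Adj x y
    · simpa [hg] using hm x y
    · simpa [hg, Set.compl_setOf] using (hm x y).compl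
  have hrep : {ω | H ω ∈ s} = ⋃ g ∈ s, {ω | H ω = g} := by
    ext ω; simp
  rw [hrep]
  exact MeasurableSet.biUnion s.to_countable fun g _ => hsingle g

end Aux

/- **Edge-perturbation stability of the local weak limit.** -/
theorem stmt_17
    (V : ℕ → Type) [∀ n, Fintype (V n)] [∀ n, Nonempty (V n)]
    (G : ∀ n, SimpleGraph (V n))
    (Ω : ℕ → Type) [∀ n, MeasurableSpace (Ω n)]
    (μ : ∀ n, Measure (Ω n)) [∀ n, IsProbabilityMeasure (μ n)]
    (H : ∀ n, Ω n → SimpleGraph (V n))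
    (hmeasAdj : ∀ n (x y : V n), MeasurableSet {ω | (H n ω).Adj x y})
    (hcard : Tendsto (fun n => (Fintype.card (V n) : ℝ)) atTop atTop)
    (hlocfin : ∀ r : ℕ, ∀ ε : ℝ, 0 < ε → ∃ M : ℕ, ∀ n,
      (Set.ncard {o : V n |
          M < Set.ncard {x : V n | (G n).Reachable o x ∧ (G n).dist o x ≤ r}} : ℝ)
        / Fintype.card (V n) ≤ ε)
    (t : ℕ → ℕ)
    (ht : Tendsto (fun n => (t n : ℝ) / Fintype.card (V n)) atTop (nhds 0))
    (hΔ : Tendsto (fun n =>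
        μ n {ω | Set.ncard (symmDiff ((G n).edgeSet) ((H n ω).edgeSet)) ≤ t n})
      atTop (nhds (1 : ENNReal))) :
    ∀ r : ℕ, Tendsto (fun n =>
        ∫ ω, ((Set.ncard {o : V n |
            (∀ x : V n, ((G n).Reachable o x ∧ (G n).dist o x ≤ r) ↔
              ((H n ω).Reachable o x ∧ (H n ω).dist o x ≤ r)) ∧
            (∀ x y : V n,
              (G n).Reachable o x → (G n).dist o x ≤ r →
              (G n).Reachable o y → (G n).dist o y ≤ r →
              ((G n).Adj x y ↔ (H n ω).Adj x y))} : ℝ)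
          / Fintype.card (V n)) ∂(μ n))
      atTop (nhds (1 : ℝ)) := by
  classical
  intro r
  show Tendsto (fun n =>
      ∫ ω, ((Set.ncard (goodSet r (G n) (H n ω)) : ℝ) / Fintype.card (V n)) ∂(μ n))
    atTop (nhds (1 : ℝ))
  have hN : ∀ n, (0 : ℝ) < Fintype.card (V n) := fun n => by
    exact_mod_cast Fintype.card_pos
  -- basic bounds on the integrand
  have hF0 : ∀ n (ω : Ω n), 0 ≤ (Set.ncard (goodSet r (G n) (H n ω)) : ℝ) / Fintype.card (V n) :=
    fun n ω => div_nonneg (Nat.cast_nonneg _) (hN n).le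
  have hF1 : ∀ n (ω : Ω n),
      (Set.ncard (goodSet r (G n) (H n ω)) : ℝ) / Fintype.card (V n) ≤ 1 := by
    intro n ω
    rw [div_le_one (hN n)]
    have : (goodSet r (G n) (H n ω)).ncard ≤ Fintype.card (V n) := by
      refine le_trans (Set.ncard_le_ncard (Set.subset_univ _) Set.finite_univ) ?_
      rw [Set.ncard_univ, Nat.card_eq_fintype_card]
    exact_mod_cast this
  have hmeasF : ∀ n, Measurable
      (fun ω => (Set.ncard (goodSet r (G n) (H n ω)) : ℝ) / Fintype.card (V n)) := by
    intro n s _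
    exact measurableSet_graph_pre (H n) (hmeasAdj n)
      ((fun g : SimpleGraph (V n) =>
        (Set.ncard (goodSet r (G n) g) : ℝ) / Fintype.card (V n)) ⁻¹' s)
  have hInt : ∀ n, Integrable
      (fun ω => (Set.ncard (goodSet r (G n) (H n ω)) : ℝ) / Fintype.card (V n)) (μ n) := by
    intro n
    refine (integrable_const (1 : ℝ)).mono' (hmeasF n).aestronglyMeasurable
      (Eventually.of_forall fun ω => ?_)
    rw [Real.norm_eq_abs, abs_of_nonneg (hF0 n ω)]
    exact hF1 n ω
  have hupper : ∀ n,
      (∫ ω, ((Set.ncard (goodSet r (G n) (H n ω)) : ℝ) / Fintype.card (V n)) ∂(μ n)) ≤ 1 := by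
    intro n
    calc (∫ ω, ((Set.ncard (goodSet r (G n) (H n ω)) : ℝ) / Fintype.card (V n)) ∂(μ n))
        ≤ ∫ _, (1 : ℝ) ∂(μ n) := integral_mono (hInt n) (integrable_const _) (hF1 n)
      _ = 1 := by simp
  refine tendsto_order.2 ⟨fun c hc => ?_, fun c hc =>
    Eventually.of_forall fun n => lt_of_le_of_lt (hupper n) hc⟩
  -- lower bound : fix ε
  set ε : ℝ := min ((1 - c) / 8) (1 / 8) with hεdef
  have hε : 0 < ε := lt_min (by linarith) (by norm_num)
  have hε1 : ε ≤ (1 - c) / 8 := min_le_left _ _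
  have hε2 : ε ≤ 1 / 8 := min_le_right _ _
  obtain ⟨M, hM⟩ := hlocfin (2 * r) ε hε
  -- the event
  have hEmeas : ∀ n, MeasurableSet
      {ω | Set.ncard (symmDiff ((G n).edgeSet) ((H n ω).edgeSet)) ≤ t n} := fun n =>
    measurableSet_graph_pre (H n) (hmeasAdj n)
      {g | Set.ncard (symmDiff ((G n).edgeSet) (g.edgeSet)) ≤ t n}
  -- pointwise bound on the event
  have hpoint : ∀ n (ω : Ω n),
      Set.ncard (symmDiff ((G n).edgeSet) ((H n ω).edgeSet)) ≤ t n →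
      1 - ε - (2 * M * t n) / Fintype.card (V n) ≤
        (Set.ncard (goodSet r (G n) (H n ω)) : ℝ) / Fintype.card (V n) := by
    intro n ω hω
    set Gn := G n with hGn
    set Hn := H n ω with hHn
    set S : Set (V n) := {v | ∃ w, ¬(Gn.Adj v w ↔ Hn.Adj v w)} with hSdef
    set A : Set (V n) := {o : V n |
        M < Set.ncard {x : V n | Gn.Reachable o x ∧ Gn.dist o x ≤ 2 * r}} with hAdef
    set T : Set (V n) := {o | (∃ v, v ∈ gBall Gn o r ∧ v ∈ S) ∧
        (gBall Gn o (2 * r)).ncard ≤ M} with hTdef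
    -- bad roots are covered
    have step1 : (goodSet r Gn Hn)ᶜ ⊆ A ∪ T := by
      intro o ho
      by_cases hA : M < (gBall Gn o (2 * r)).ncard
      · exact Or.inl hA
      · refine Or.inr ⟨?_, le_of_not_gt hA⟩
        by_contra hno
        push_neg at hno
        refine ho ?_
        have hfree : ∀ v, Gn.Reachable o v → Gn.dist o v ≤ r →
            ∀ w, (Gn.Adj v w ↔ Hn.Adj v w) := by
          intro v h1 h2 w
          by_contra hcw
          exact hno v ⟨h1, h2⟩ ⟨w, hcw⟩
        exact good_of_free hfree
    -- endpoints of the symmetric difference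
    set EP : Set (V n) := ⋃ e ∈ symmDiff Gn.edgeSet Hn.edgeSet, {v | v ∈ e} with hEPdef
    have step2 : S ⊆ EP := by
      rintro v ⟨w, hw⟩
      have he : s(v, w) ∈ symmDiff Gn.edgeSet Hn.edgeSet := by
        rw [Set.mem_symmDiff, SimpleGraph.mem_edgeSet, SimpleGraph.mem_edgeSet]
        tauto
      exact Set.mem_biUnion he (Sym2.mem_mk_left v w)
    have hEP : EP.ncard ≤ t n * 2 := by
      refine le_trans (ncard_biUnion_le_aux (Set.toFinite _) _ 2
        (fun e _ => ncard_sym2_mem_le e)) ?_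
      exact Nat.mul_le_mul_right 2 hω
    -- each endpoint contributes at most M roots
    have step4 : ∀ v : V n,
        {o : V n | v ∈ gBall Gn o r ∧ (gBall Gn o (2 * r)).ncard ≤ M}.ncard ≤ M := by
      intro v
      rcases Set.eq_empty_or_nonempty
        {o : V n | v ∈ gBall Gn o r ∧ (gBall Gn o (2 * r)).ncard ≤ M} with he | ⟨o0, ho0⟩
      · simp [he]
      · have hsub : {o : V n | v ∈ gBall Gn o r ∧ (gBall Gn o (2 * r)).ncard ≤ M}
            ⊆ gBall Gn o0 (2 * r) := by
          rintro o ⟨⟨h1, h2⟩, _⟩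
          obtain ⟨p0, hp0⟩ := ho0.1.1.exists_walk_length_eq_dist
          obtain ⟨p, hp⟩ := h1.exists_walk_length_eq_dist
          refine ⟨⟨p0.append p.reverse⟩,
            le_trans (SimpleGraph.dist_le (p0.append p.reverse)) ?_⟩
          rw [SimpleGraph.Walk.length_append, SimpleGraph.Walk.length_reverse, hp0, hp]
          have h02 : Gn.dist o0 v ≤ r := ho0.1.2
          omega
        exact le_trans (Set.ncard_le_ncard hsub (Set.toFinite _)) ho0.2
    have step5 : T ⊆ ⋃ v ∈ EP,
        {o : V n | v ∈ gBall Gn o r ∧ (gBall Gn o (2 * r)).ncard ≤ M} := by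
      rintro o ⟨⟨v, hv1, hv2⟩, hMo⟩
      exact Set.mem_biUnion (step2 hv2) ⟨hv1, hMo⟩
    have step6 : T.ncard ≤ 2 * M * t n := by
      calc T.ncard ≤ (⋃ v ∈ EP,
            {o : V n | v ∈ gBall Gn o r ∧ (gBall Gn o (2 * r)).ncard ≤ M}).ncard :=
            Set.ncard_le_ncard step5 (Set.toFinite _)
        _ ≤ EP.ncard * M := ncard_biUnion_le_aux (Set.toFinite _) _ M (fun v _ => step4 v)
        _ ≤ (t n * 2) * M := Nat.mul_le_mul_right M hEP
        _ = 2 * M * t n := by ring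
    -- counting
    have hcomp : (goodSet r Gn Hn).ncard + (goodSet r Gn Hn)ᶜ.ncard = Fintype.card (V n) :=
      (Set.ncard_add_ncard_compl _).trans Nat.card_eq_fintype_card
    have hbad : (goodSet r Gn Hn)ᶜ.ncard ≤ A.ncard + T.ncard :=
      le_trans (Set.ncard_le_ncard step1 (Set.toFinite _)) (Set.ncard_union_le _ _)
    -- pass to reals
    have e1 : ((goodSet r Gn Hn).ncard : ℝ) + ((goodSet r Gn Hn)ᶜ.ncard : ℝ)
        = Fintype.card (V n) := by exact_mod_cast hcomp
    have e2 : ((goodSet r Gn Hn)ᶜ.ncard : ℝ) ≤ (A.ncard : ℝ) + (T.ncard : ℝ) := by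
      exact_mod_cast hbad
    have e3 : (T.ncard : ℝ) ≤ 2 * (M : ℝ) * (t n : ℝ) := by exact_mod_cast step6
    have e4 : (A.ncard : ℝ) ≤ ε * Fintype.card (V n) := by
      have := hM n
      rw [div_le_iff₀ (hN n)] at this
      exact this
    rw [le_div_iff₀ (hN n)]
    have e5 : (1 - ε - 2 * (M : ℝ) * (t n : ℝ) / Fintype.card (V n)) * Fintype.card (V n)
        = Fintype.card (V n) - ε * Fintype.card (V n) - 2 * (M : ℝ) * (t n : ℝ) := by
      field_simp
    rw [e5]
    linarith
  -- lower bound for the integral via the indicator function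
  have hlow : ∀ n, (μ n {ω | Set.ncard (symmDiff ((G n).edgeSet) ((H n ω).edgeSet)) ≤ t n}).toReal
      * (1 - ε - (2 * M * t n) / Fintype.card (V n)) ≤
      ∫ ω, ((Set.ncard (goodSet r (G n) (H n ω)) : ℝ) / Fintype.card (V n)) ∂(μ n) := by
    intro n
    have hmono : ({ω | Set.ncard (symmDiff ((G n).edgeSet) ((H n ω).edgeSet)) ≤ t n}).indicator
        (fun _ => (1 - ε - (2 * M * t n) / Fintype.card (V n))) ≤
        fun ω => (Set.ncard (goodSet r (G n) (H n ω)) : ℝ) / Fintype.card (V n) := by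
      intro ω
      by_cases hω : ω ∈ {ω | Set.ncard (symmDiff ((G n).edgeSet) ((H n ω).edgeSet)) ≤ t n}
      · rw [Set.indicator_of_mem hω]
        exact hpoint n ω hω
      · rw [Set.indicator_of_notMem hω]
        exact hF0 n ω
    have := integral_mono ((integrable_const _).indicator (hEmeas n)) (hInt n) hmono
    rwa [integral_indicator_const _ (hEmeas n), smul_eq_mul] at this
  -- convergence of the two error terms
  have hμ : Tendsto (fun n =>
      (μ n {ω | Set.ncard (symmDiff ((G n).edgeSet) ((H n ω).edgeSet)) ≤ t n}).toReal)
      atTop (nhds 1) := by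
    have h1 := (ENNReal.tendsto_toReal (by norm_num : (1 : ENNReal) ≠ ⊤)).comp hΔ
    simpa [Function.comp_def] using h1
  have h2M1 : (0 : ℝ) < 2 * (M : ℝ) + 1 := by positivity
  have h2 : ∀ᶠ n in atTop, (t n : ℝ) / Fintype.card (V n) < ε / (2 * (M : ℝ) + 1) :=
    ht.eventually (gt_mem_nhds (by positivity))
  have h3 : ∀ᶠ n in atTop,
      1 - ε < (μ n {ω | Set.ncard (symmDiff ((G n).edgeSet) ((H n ω).edgeSet)) ≤ t n}).toReal :=
    hμ.eventually (lt_mem_nhds (by linarith))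
  filter_upwards [h2, h3] with n h2n h3n
  have htn0 : (0 : ℝ) ≤ (t n : ℝ) / Fintype.card (V n) :=
    div_nonneg (Nat.cast_nonneg _) (hN n).le
  have hcn : 1 - 2 * ε ≤ 1 - ε - (2 * M * t n) / Fintype.card (V n) := by
    have ha : (2 * M * t n : ℝ) / Fintype.card (V n)
        = 2 * (M : ℝ) * ((t n : ℝ) / Fintype.card (V n)) := by
      rw [mul_div_assoc]
    have hb : 2 * (M : ℝ) * ((t n : ℝ) / Fintype.card (V n))
        ≤ 2 * (M : ℝ) * (ε / (2 * (M : ℝ) + 1)) :=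
      mul_le_mul_of_nonneg_left h2n.le (by positivity)
    have hc2 : 2 * (M : ℝ) * (ε / (2 * (M : ℝ) + 1)) ≤ ε := by
      rw [mul_div_assoc']
      rw [div_le_iff₀ h2M1]
      nlinarith [hε.le]
    rw [ha]
    linarith
  have hprod : (1 - ε) * (1 - 2 * ε) ≤
      (μ n {ω | Set.ncard (symmDiff ((G n).edgeSet) ((H n ω).edgeSet)) ≤ t n}).toReal
      * (1 - ε - (2 * M * t n) / Fintype.card (V n)) :=
    mul_le_mul h3n.le hcn (by linarith) ENNReal.toReal_nonneg
  have hc' : c < (1 - ε) * (1 - 2 * ε) := by nlinarith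
  exact lt_of_lt_of_le hc' (le_trans hprod (hlow n))
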